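/- Assume char k ≠ 2, that α2, α3, β2, β3 are pairwise distinct and all nonzero, and that α2·α3 ≠ β2·β3. Then the affine plane curve f(Y,Z) = 0 is smooth: for every (Y,Z) ∈ k² with f(Y,Z) = 0, the two partial derivatives ∂f/∂Y = 2Y·(2b40·Y² + b22·Z² + b20) and ∂f/∂Z = 2Z·(2b04·Z² + b22·Y² + b02) are not both zero at (Y,Z). -/
import Mathlib


/-- Affine smoothness part of Theorem 4.6: at every point of the affine quartic
`f(Y,Z) = 0` the two partial derivatives do not vanish simultaneously. -/
theorem quartic_affine_smooth
    {k : Type*} [Field k] (hchar : ringChar k ≠ 2)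
    (α2 α3 β2 β3 τ1 τ2 ρ1 ρ2 b40 b22 b04 b20 b02 b00 : k)
    (hτ1 : τ1 = α2 + α3) (hτ2 : τ2 = α2 * α3)
    (hρ1 : ρ1 = β2 + β3) (hρ2 : ρ2 = β2 * β3)
    (hb40 : b40 = ρ2) (hb22 : b22 = -(τ2 + ρ2)) (hb04 : b04 = τ2)
    (hb20 : b20 = 2 * τ1 * ρ2 - τ2 * ρ1 - ρ1 * ρ2)
    (hb02 : b02 = -(τ1 * τ2) - τ1 * ρ2 + 2 * τ2 * ρ1)
    (hb00 : b00 = τ1 ^ 2 * ρ2 - τ1 * τ2 * ρ1 - τ1 * ρ1 * ρ2 + τ2 ^ 2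
        + τ2 * ρ1 ^ 2 - 2 * τ2 * ρ2 + ρ2 ^ 2)
    (hdist : α2 ≠ α3 ∧ α2 ≠ β2 ∧ α2 ≠ β3 ∧ α3 ≠ β2 ∧ α3 ≠ β3 ∧ β2 ≠ β3)
    (hnz : α2 ≠ 0 ∧ α3 ≠ 0 ∧ β2 ≠ 0 ∧ β3 ≠ 0)
    (hnh : α2 * α3 ≠ β2 * β3) :
    ∀ Y Z : k,
      b40 * Y ^ 4 + b22 * Y ^ 2 * Z ^ 2 + b04 * Z ^ 4
          + b20 * Y ^ 2 + b02 * Z ^ 2 + b00 = 0 →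
      ¬ (2 * Y * (2 * b40 * Y ^ 2 + b22 * Z ^ 2 + b20) = 0
          ∧ 2 * Z * (2 * b04 * Z ^ 2 + b22 * Y ^ 2 + b02) = 0) := by

  intro Y Z hf ⟨h1, h2⟩
  subst hb40 hb22 hb04 hb20 hb02 hb00 hτ1 hτ2 hρ1 hρ2
  obtain ⟨hd1, hd2, hd3, hd4, hd5, hd6⟩ := hdist
  have h2ne : (2 : k) ≠ 0 := Ring.two_ne_zero hchar
  have hts : α2 * α3 - β2 * β3 ≠ 0 := sub_ne_zero.mpr hnh
  rcases mul_eq_zero.mp h1 with h1' | hA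
  · -- Y = 0
    have hY : Y = 0 := by
      rcases mul_eq_zero.mp h1' with h | h
      · exact absurd h h2ne
      · exact h
    subst hY
    rcases mul_eq_zero.mp h2 with h2' | hB
    · -- Z = 0 as well
      have hZ : Z = 0 := by
        rcases mul_eq_zero.mp h2' with h | h
        · exact absurd h h2ne
        · exact h
      subst hZ
      have key : (α2 - β2) * (α2 - β3) * (α3 - β2) * (α3 - β3) = 0 := by
        linear_combination hf
      rcases mul_eq_zero.mp key with key | h
      · rcases mul_eq_zero.mp key with key | h
        · rcases mul_eq_zero.mp key with h | h
          · exact sub_ne_zero.mpr hd2 h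
          · exact sub_ne_zero.mpr hd3 h
        · exact sub_ne_zero.mpr hd4 h
      · exact sub_ne_zero.mpr hd5 h
    · have key : ((α2 - α3) * (α2 * α3 - β2 * β3)) ^ 2 = 0 := by
        linear_combination (2 * (α2 * α3) * Z ^ 2 - (α2 + α3) * (α2 * α3)
            - (α2 + α3) * (β2 * β3) + 2 * (α2 * α3) * (β2 + β3)) * hB - 4 * (α2 * α3) * hf
      exact mul_ne_zero (sub_ne_zero.mpr hd1) hts (pow_eq_zero_iff two_ne_zero |>.mp key)
  · rcases mul_eq_zero.mp h2 with h2' | hB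
    · -- Z = 0
      have hZ : Z = 0 := by
        rcases mul_eq_zero.mp h2' with h | h
        · exact absurd h h2ne
        · exact h
      subst hZ
      have key : ((β2 - β3) * (α2 * α3 - β2 * β3)) ^ 2 = 0 := by
        linear_combination (2 * (β2 * β3) * Y ^ 2 + 2 * (α2 + α3) * (β2 * β3)
            - (α2 * α3) * (β2 + β3) - (β2 + β3) * (β2 * β3)) * hA - 4 * (β2 * β3) * hf
      exact mul_ne_zero (sub_ne_zero.mpr hd6) hts (pow_eq_zero_iff two_ne_zero |>.mp key)
    · -- general case
      have key : 2 * (α2 * α3 - β2 * β3) ^ 4 = 0 := by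
        linear_combination
          ((4 * (β2 * β3) * (α2 * α3) - (α2 * α3 + β2 * β3) ^ 2) * Y ^ 2
              - ((-(α2 * α3 + β2 * β3)) * (-((α2 + α3) * (α2 * α3)) - (α2 + α3) * (β2 * β3)
                  + 2 * (α2 * α3) * (β2 + β3))
                - 2 * (α2 * α3) * (2 * (α2 + α3) * (β2 * β3) - (α2 * α3) * (β2 + β3)
                  - (β2 + β3) * (β2 * β3)))) * hA
          + ((4 * (β2 * β3) * (α2 * α3) - (α2 * α3 + β2 * β3) ^ 2) * Z ^ 2
              - ((-(α2 * α3 + β2 * β3)) * (2 * (α2 + α3) * (β2 * β3) - (α2 * α3) * (β2 + β3)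
                  - (β2 + β3) * (β2 * β3))
                - 2 * (β2 * β3) * (-((α2 + α3) * (α2 * α3)) - (α2 + α3) * (β2 * β3)
                  + 2 * (α2 * α3) * (β2 + β3)))) * hB
          - 2 * (4 * (β2 * β3) * (α2 * α3) - (α2 * α3 + β2 * β3) ^ 2) * hf
      rcases mul_eq_zero.mp key with h | h
      · exact h2ne h
      · exact pow_ne_zero 4 hts h
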